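/- Let k be a field and q ∈ k^×. The set of coinvariants of γ, namely {w ∈ O_q(k^m) ⊗_k O_q(k^n) : γ(w) = 1 ⊗ w}, is exactly the image of the algebra O_q(M_{m,n}(k)) in O_q(k^m) ⊗_k O_q(k^n) under the homomorphism θ. -/

import Mathlib

open scoped TensorProduct

set_option maxHeartbeats 1000000
set_option synthInstance.maxHeartbeats 400000

noncomputable section

/-- Defining relations of the coordinate ring `O_q(k^n)` of quantum affine `n`-space:
`y_i y_j = q y_j y_i` for `i < j`. -/
inductive AffRel (k : Type) [Field k] (q : k) (n : ℕ) :
    FreeAlgebra k (Fin n) → FreeAlgebra k (Fin n) → Prop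
  | rel : ∀ {i j : Fin n}, i < j →
      AffRel k q n (FreeAlgebra.ι k i * FreeAlgebra.ι k j)
        (q • (FreeAlgebra.ι k j * FreeAlgebra.ι k i))

/-- The coordinate ring `O_q(k^n)` of quantum affine `n`-space. -/
abbrev QAff (k : Type) [Field k] (q : k) (n : ℕ) : Type := RingQuot (AffRel k q n)

/-- The canonical generators `y_1, …, y_n` of `O_q(k^n)`. -/
def affGen (k : Type) [Field k] (q : k) (n : ℕ) (i : Fin n) : QAff k q n :=
  RingQuot.mkAlgHom k (AffRel k q n) (FreeAlgebra.ι k i)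

/-- Defining relations of the coordinate ring `O_q(M_{m,n}(k))` of quantum `m × n` matrices. -/
inductive MatRel (k : Type) [Field k] (q : k) (m n : ℕ) :
    FreeAlgebra k (Fin m × Fin n) → FreeAlgebra k (Fin m × Fin n) → Prop
  | col : ∀ {i l : Fin m} {j : Fin n}, i < l →
      MatRel k q m n (FreeAlgebra.ι k (i, j) * FreeAlgebra.ι k (l, j))
        (q • (FreeAlgebra.ι k (l, j) * FreeAlgebra.ι k (i, j)))
  | row : ∀ {i : Fin m} {j s : Fin n}, j < s →
      MatRel k q m n (FreeAlgebra.ι k (i, j) * FreeAlgebra.ι k (i, s))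
        (q • (FreeAlgebra.ι k (i, s) * FreeAlgebra.ι k (i, j)))
  | comm : ∀ {i l : Fin m} {j s : Fin n}, i < l → j < s →
      MatRel k q m n (FreeAlgebra.ι k (i, s) * FreeAlgebra.ι k (l, j))
        (FreeAlgebra.ι k (l, j) * FreeAlgebra.ι k (i, s))
  | mixed : ∀ {i l : Fin m} {j s : Fin n}, i < l → j < s →
      MatRel k q m n
        (FreeAlgebra.ι k (i, j) * FreeAlgebra.ι k (l, s) -
          FreeAlgebra.ι k (l, s) * FreeAlgebra.ι k (i, j))
        ((q - q⁻¹) • (FreeAlgebra.ι k (i, s) * FreeAlgebra.ι k (l, j)))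

/-- The coordinate ring `O_q(M_{m,n}(k))` of quantum `m × n` matrices. -/
abbrev QMat (k : Type) [Field k] (q : k) (m n : ℕ) : Type := RingQuot (MatRel k q m n)

/-- The canonical generators `X i j` of `O_q(M_{m,n}(k))`. -/
def X (k : Type) [Field k] (q : k) (m n : ℕ) (i : Fin m) (j : Fin n) : QMat k q m n :=
  RingQuot.mkAlgHom k (MatRel k q m n) (FreeAlgebra.ι k (i, j))

/-- The two-sided ideal `I₁` of `O_q(M_{m,n}(k))` generated by the `2 × 2` quantum minors
`X_{ij} X_{ls} - q X_{is} X_{lj}` for `i < l`, `j < s`. -/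
def I₁ (k : Type) [Field k] (q : k) (m n : ℕ) : TwoSidedIdeal (QMat k q m n) :=
  TwoSidedIdeal.span
    { a | ∃ (i l : Fin m) (j s : Fin n), i < l ∧ j < s ∧
        a = X k q m n i j * X k q m n l s - q • (X k q m n i s * X k q m n l j) }

/-- The monomial `X_{i₁j₁} X_{i₂j₂} ⋯ X_{iₗjₗ}` associated to a list of index pairs. -/
def matMono (k : Type) [Field k] (q : k) (m n : ℕ) (L : List (Fin m × Fin n)) :
    QMat k q m n :=
  (L.map fun p => X k q m n p.1 p.2).prod

/-- A list of index pairs is *ordered* if the row indices are non-increasing and the column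
indices are non-decreasing, i.e. `i₁ ≥ i₂ ≥ ⋯ ≥ iₗ` and `j₁ ≤ j₂ ≤ ⋯ ≤ jₗ`. -/
def OrderedIdx {m n : ℕ} (L : List (Fin m × Fin n)) : Prop :=
  L.Chain' fun p p' => p'.1 ≤ p.1 ∧ p.2 ≤ p'.2

section Aux

variable (k : Type) [Field k] (q : k) (m n : ℕ)

/-- Monomial in `QAff`. -/
def affMono (L : List (Fin n)) : QAff k q n := (L.map (affGen k q n)).prod

lemma qaff_adjoin_top : Algebra.adjoin k (Set.range (affGen k q n)) = ⊤ := by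
  have h1 : Set.range (affGen k q n) =
      (RingQuot.mkAlgHom k (AffRel k q n)) '' (Set.range (FreeAlgebra.ι k)) := by
    rw [← Set.range_comp]; rfl
  rw [h1, Algebra.adjoin_image, FreeAlgebra.adjoin_range_ι, Algebra.map_top]
  rw [AlgHom.range_eq_top]
  exact RingQuot.mkAlgHom_surjective k _

lemma qaff_span : Submodule.span k {v : QAff k q n | ∃ L, v = affMono k q n L} = ⊤ := by
  rw [eq_top_iff]
  have h := Algebra.adjoin_eq_span (R := k) (s := Set.range (affGen k q n))
  rw [qaff_adjoin_top] at h
  rw [← Algebra.top_toSubmodule, h]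
  apply Submodule.span_le.2
  intro x hx
  obtain ⟨l, hl, rfl⟩ := Submonoid.exists_list_of_mem_closure hx
  apply Submodule.subset_span
  clear hx
  induction l with
  | nil => exact ⟨[], by simp [affMono]⟩
  | cons a t ih =>
      obtain ⟨i, rfl⟩ := hl a List.mem_cons_self
      obtain ⟨L, hL⟩ := ih fun x hx => hl x (List.mem_cons_of_mem _ hx)
      exact ⟨i :: L, by simp [affMono, List.prod_cons, hL]⟩

/-- Coefficient-of-`T^0` functional. -/
def coeff0 : LaurentPolynomial k →ₗ[k] k where
  toFun p := p.coeff 0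
  map_add' a b := rfl
  map_smul' c a := by
    show (c • a).coeff 0 = c * a.coeff 0
    rfl

variable {k q m n}

lemma theta_matMono (θ : QMat k q m n →ₐ[k] QAff k q m ⊗[k] QAff k q n)
    (hθ : ∀ (i : Fin m) (j : Fin n),
      θ (X k q m n i j) = affGen k q m i ⊗ₜ[k] affGen k q n j)
    (LP : List (Fin m × Fin n)) :
    θ (matMono k q m n LP) =
      affMono k q m (LP.map Prod.fst) ⊗ₜ[k] affMono k q n (LP.map Prod.snd) := by
  induction LP with
  | nil => simp [matMono, affMono, Algebra.TensorProduct.one_def]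
  | cons p t ih =>
      have h1 : matMono k q m n (p :: t) = X k q m n p.1 p.2 * matMono k q m n t := by
        simp [matMono]
      rw [h1, map_mul, hθ, ih]
      simp [affMono, Algebra.TensorProduct.tmul_mul_tmul]

variable (γ : QAff k q m ⊗[k] QAff k q n →ₐ[k]
      LaurentPolynomial k ⊗[k] (QAff k q m ⊗[k] QAff k q n))

lemma gamma_y (hγy : ∀ i : Fin m, γ (affGen k q m i ⊗ₜ[k] 1) =
      LaurentPolynomial.T (-1) ⊗ₜ[k] (affGen k q m i ⊗ₜ[k] 1))
    (a : List (Fin m)) :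
    γ (affMono k q m a ⊗ₜ[k] 1) =
      LaurentPolynomial.T (-(a.length : ℤ)) ⊗ₜ[k] (affMono k q m a ⊗ₜ[k] 1) := by
  induction a with
  | nil =>
    simp [affMono, ← Algebra.TensorProduct.one_def]
    exact γ.map_one'
  | cons i t ih =>
      have h1 : (affMono k q m (i :: t) : QAff k q m) ⊗ₜ[k] (1 : QAff k q n) =
          (affGen k q m i ⊗ₜ[k] (1 : QAff k q n)) * (affMono k q m t ⊗ₜ[k] 1) := by
        simp [affMono, Algebra.TensorProduct.tmul_mul_tmul]
      rw [h1, map_mul, hγy, ih, Algebra.TensorProduct.tmul_mul_tmul,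
        ← LaurentPolynomial.T_add, ← h1]
      congr 2
      push_cast [List.length_cons]
      ring

lemma gamma_z (hγz : ∀ j : Fin n, γ (1 ⊗ₜ[k] affGen k q n j) =
      LaurentPolynomial.T 1 ⊗ₜ[k] (1 ⊗ₜ[k] affGen k q n j))
    (b : List (Fin n)) :
    γ ((1 : QAff k q m) ⊗ₜ[k] affMono k q n b) =
      LaurentPolynomial.T (b.length : ℤ) ⊗ₜ[k] ((1 : QAff k q m) ⊗ₜ[k] affMono k q n b) := by
  induction b with
  | nil =>
    simp [affMono, ← Algebra.TensorProduct.one_def]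
    exact γ.map_one'
  | cons j t ih =>
      have h1 : (1 : QAff k q m) ⊗ₜ[k] (affMono k q n (j :: t)) =
          ((1 : QAff k q m) ⊗ₜ[k] affGen k q n j) * ((1 : QAff k q m) ⊗ₜ[k] affMono k q n t) := by
        simp [affMono, Algebra.TensorProduct.tmul_mul_tmul]
      rw [h1, map_mul, hγz, ih, Algebra.TensorProduct.tmul_mul_tmul,
        ← LaurentPolynomial.T_add, ← h1]
      congr 2
      push_cast [List.length_cons]
      ring

lemma gamma_mono (hγy : ∀ i : Fin m, γ (affGen k q m i ⊗ₜ[k] 1) =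
      LaurentPolynomial.T (-1) ⊗ₜ[k] (affGen k q m i ⊗ₜ[k] 1))
    (hγz : ∀ j : Fin n, γ (1 ⊗ₜ[k] affGen k q n j) =
      LaurentPolynomial.T 1 ⊗ₜ[k] (1 ⊗ₜ[k] affGen k q n j))
    (a : List (Fin m)) (b : List (Fin n)) :
    γ (affMono k q m a ⊗ₜ[k] affMono k q n b) =
      LaurentPolynomial.T ((b.length : ℤ) - (a.length : ℤ)) ⊗ₜ[k]
        (affMono k q m a ⊗ₜ[k] affMono k q n b) := by
  have h1 : affMono k q m a ⊗ₜ[k] affMono k q n b =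
      (affMono k q m a ⊗ₜ[k] (1 : QAff k q n)) *
        ((1 : QAff k q m) ⊗ₜ[k] affMono k q n b) := by
    simp [Algebra.TensorProduct.tmul_mul_tmul]
  rw [h1, map_mul, gamma_y γ hγy, gamma_z γ hγz, Algebra.TensorProduct.tmul_mul_tmul,
    ← LaurentPolynomial.T_add, ← h1]
  congr 2
  ring

end Aux

/-- The set of coinvariants of `γ` is exactly the image of
`O_q(M_{m,n}(k))` under `θ`. -/
theorem coinvariants_eq_image_theta (k : Type) [Field k] (q : k) (hq : q ≠ 0) (m n : ℕ)
    (θ : QMat k q m n →ₐ[k] QAff k q m ⊗[k] QAff k q n)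
    (hθ : ∀ (i : Fin m) (j : Fin n),
      θ (X k q m n i j) = affGen k q m i ⊗ₜ[k] affGen k q n j)
    (γ : QAff k q m ⊗[k] QAff k q n →ₐ[k]
      LaurentPolynomial k ⊗[k] (QAff k q m ⊗[k] QAff k q n))
    (hγy : ∀ i : Fin m, γ (affGen k q m i ⊗ₜ[k] 1) =
      LaurentPolynomial.T (-1) ⊗ₜ[k] (affGen k q m i ⊗ₜ[k] 1))
    (hγz : ∀ j : Fin n, γ (1 ⊗ₜ[k] affGen k q n j) =
      LaurentPolynomial.T 1 ⊗ₜ[k] (1 ⊗ₜ[k] affGen k q n j)) :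
    { w : QAff k q m ⊗[k] QAff k q n | γ w = 1 ⊗ₜ[k] w } = Set.range θ := by
  set V := QAff k q m ⊗[k] QAff k q n
  -- the projection onto the degree-0 part
  set P : LaurentPolynomial k ⊗[k] V →ₗ[k] V :=
    (TensorProduct.lid k V).toLinearMap ∘ₗ TensorProduct.map (coeff0 k) LinearMap.id with hP
  have hPtmul : ∀ (p : LaurentPolynomial k) (v : V), P (p ⊗ₜ[k] v) = p.coeff 0 • v := by
    intro p v
    simp [hP, coeff0]
    rfl
  have hPT : ∀ (d : ℤ) (v : V), P (LaurentPolynomial.T d ⊗ₜ[k] v) =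
      if d = 0 then v else 0 := by
    intro d v
    rw [hPtmul, LaurentPolynomial.T_apply]
    split <;> simp
  ext w
  constructor
  · -- coinvariant → in the image
    intro hw
    have key : ∀ v : V, P (γ v) ∈ Subalgebra.toSubmodule θ.range := by
      intro v
      induction v using TensorProduct.induction_on with
      | zero => simp
      | add x y hx hy => rw [map_add, map_add]; exact Submodule.add_mem _ hx hy
      | tmul x y =>
          have hx : x ∈ Submodule.span k {v : QAff k q m | ∃ L, v = affMono k q m L} := by
            rw [qaff_span]; trivial
          induction hx using Submodule.span_induction with
          | zero => simp
          | add x₁ x₂ _ _ h₁ h₂ =>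
              rw [TensorProduct.add_tmul, map_add, map_add]
              exact Submodule.add_mem _ h₁ h₂
          | smul c x₁ _ h₁ =>
              rw [← TensorProduct.smul_tmul', map_smul, map_smul]
              exact Submodule.smul_mem _ _ h₁
          | mem x hx =>
              obtain ⟨a, rfl⟩ := hx
              have hy : y ∈ Submodule.span k {v : QAff k q n | ∃ L, v = affMono k q n L} := by
                rw [qaff_span]; trivial
              induction hy using Submodule.span_induction with
              | zero => simp
              | add y₁ y₂ _ _ h₁ h₂ =>
                  rw [TensorProduct.tmul_add, map_add, map_add]
                  exact Submodule.add_mem _ h₁ h₂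
              | smul c y₁ _ h₁ =>
                  rw [TensorProduct.tmul_smul, map_smul, map_smul]
                  exact Submodule.smul_mem _ _ h₁
              | mem y hy =>
                  obtain ⟨b, rfl⟩ := hy
                  rw [gamma_mono γ hγy hγz, hPT]
                  split
                  · rename_i hd
                    have hlen : a.length = b.length := by omega
                    have heq : θ (matMono k q m n (a.zip b)) =
                        affMono k q m a ⊗ₜ[k] affMono k q n b := by
                      rw [theta_matMono θ hθ, List.map_fst_zip hlen.le,
                        List.map_snd_zip hlen.ge]
                    exact (AlgHom.mem_range _).mpr ⟨matMono k q m n (a.zip b), heq⟩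
                  · exact Submodule.zero_mem _
    have hw2 : P (γ w) = w := by
      rw [hw, hPtmul]
      have h1 : ((1 : LaurentPolynomial k)).coeff 0 = 1 := by
        rw [← LaurentPolynomial.T_zero, LaurentPolynomial.T_apply]
        simp
      rw [h1, one_smul]
    have := key w
    rw [hw2] at this
    exact this
  · -- image → coinvariant
    rintro ⟨x, rfl⟩
    show γ (θ x) = 1 ⊗ₜ[k] θ x
    have hfg : γ.comp θ =
        (Algebra.TensorProduct.includeRight (R := k) (A := LaurentPolynomial k)
          (B := V)).comp θ := by
      apply RingQuot.ringQuot_ext'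
      apply FreeAlgebra.hom_ext
      funext p
      obtain ⟨i, j⟩ := p
      show γ (θ (X k q m n i j)) = Algebra.TensorProduct.includeRight (θ (X k q m n i j))
      rw [hθ]
      have h1 : (affGen k q m i) ⊗ₜ[k] (affGen k q n j) =
          (affGen k q m i ⊗ₜ[k] (1 : QAff k q n)) *
            ((1 : QAff k q m) ⊗ₜ[k] affGen k q n j) := by
        simp [Algebra.TensorProduct.tmul_mul_tmul]
      rw [h1, map_mul, hγy, hγz, Algebra.TensorProduct.tmul_mul_tmul,
        ← LaurentPolynomial.T_add, neg_add_cancel, LaurentPolynomial.T_zero, ← h1]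
      simp
    calc γ (θ x) = (γ.comp θ) x := rfl
      _ = Algebra.TensorProduct.includeRight (θ x) := by rw [hfg]; rfl
      _ = 1 ⊗ₜ[k] θ x := rfl
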